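/- arXiv:2306.13216 — 2 statements merged into one kernel-verified Lean document; each statement's English description precedes it below -/
import Mathlib

section
/- The uncertainty coefficient of an added feature X given the existing feature set F equals 1 if and only if the dispersal ratio upon adding X equals 1; that is, U(X|F) = 1 ⟺ Disperse(S, X, P) = 1. -/
open Finset

/-- Empirical Shannon entropy (base 2) of a feature `Y` on the finite population `P`. -/
noncomputable def empEntropy {P α : Type*} [Fintype P] [DecidableEq α] (Y : P → α) : ℝ :=
  -∑ a ∈ Finset.univ.image Y,
      (((Finset.univ.filter (fun i => Y i = a)).card : ℝ) / (Fintype.card P : ℝ)) *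
        Real.logb 2 (((Finset.univ.filter (fun i => Y i = a)).card : ℝ) / (Fintype.card P : ℝ))

/-- Number of nonempty bins of the histogram of feature `Y` on `P`
    (the number of distinct observed values of `Y`). -/
def numBins {P α : Type*} [Fintype P] [DecidableEq α] (Y : P → α) : ℕ :=
  (Finset.univ.image Y).card

/-- Dispersal ratio: nonempty bins of the joint histogram of `(F, X)` divided by
    nonempty bins of the histogram of `F`. -/
noncomputable def disperse {P A B : Type*} [Fintype P] [DecidableEq A] [DecidableEq B]
    (F : P → A) (X : P → B) : ℝ :=
  (numBins (fun i => (F i, X i)) : ℝ) / (numBins F : ℝ)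

/-- Uncertainty coefficient `U(X|F) = (H(X) - H(X|F)) / H(X)` with
    `H(X|F) = H(X,F) - H(F)`. -/
noncomputable def uncertaintyCoeff {P A B : Type*} [Fintype P] [DecidableEq A] [DecidableEq B]
    (F : P → A) (X : P → B) : ℝ :=
  (empEntropy X - (empEntropy (fun i => (F i, X i)) - empEntropy F)) / empEntropy X


section Aux

variable {P A B : Type*} [Fintype P] [DecidableEq A] [DecidableEq B]

private lemma imageF_eq (F : P → A) (X : P → B) :
    (univ.image F) = (univ.image (fun i => (F i, X i))).image Prod.fst := by
  ext a
  simp [Finset.mem_image]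

private lemma card_fiber_sum (F : P → A) (X : P → B) (a : A) :
    (univ.filter (fun i => F i = a)).card
      = ∑ t ∈ (univ.image (fun i => (F i, X i))).filter (fun t => t.1 = a),
          (univ.filter (fun i => (F i, X i) = t)).card := by
  rw [Finset.card_eq_sum_card_fiberwise
    (f := fun i => (F i, X i))
    (t := (univ.image (fun i => (F i, X i))).filter (fun t => t.1 = a))
    (by intro x hx
        simp only [Finset.mem_coe, Finset.mem_filter, Finset.mem_image]
        refine ⟨⟨x, Finset.mem_univ x, rfl⟩, ?_⟩
        simpa using (Finset.mem_filter.mp hx).2)]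
  refine Finset.sum_congr rfl ?_
  intro t ht
  congr 1
  ext i
  simp only [Finset.mem_filter, Finset.mem_univ, true_and]
  constructor
  · exact fun h => h.2
  · intro h
    refine ⟨?_, h⟩
    have := (Finset.mem_filter.mp ht).2
    rw [← this, ← h]

private lemma card_le_card_fst (F : P → A) (X : P → B) (t : A × B) :
    (univ.filter (fun i => (F i, X i) = t)).card
      ≤ (univ.filter (fun i => F i = t.1)).card := by
  apply Finset.card_le_card
  intro i hi
  simp only [Finset.mem_filter, Finset.mem_univ, true_and] at hi ⊢
  rw [← hi]

private lemma one_le_card_of_mem (F : P → A) (X : P → B) {t : A × B}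
    (ht : t ∈ univ.image (fun i => (F i, X i))) :
    1 ≤ (univ.filter (fun i => (F i, X i) = t)).card := by
  rw [Finset.one_le_card]
  obtain ⟨i, -, hi⟩ := Finset.mem_image.mp ht
  exact ⟨i, Finset.mem_filter.mpr ⟨Finset.mem_univ i, hi⟩⟩

/-- The bin-count condition. -/
private def condC (F : P → A) (X : P → B) : Prop :=
  ∀ t ∈ univ.image (fun i => (F i, X i)),
    (univ.filter (fun i => F i = t.1)).card = (univ.filter (fun i => (F i, X i) = t)).card

private lemma bins_iff (F : P → A) (X : P → B) :
    (univ.image (fun i => (F i, X i))).card = (univ.image F).card ↔ condC F X := by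
  set T := univ.image (fun i => (F i, X i)) with hT
  rw [imageF_eq F X]
  rw [eq_comm, Finset.card_image_iff]
  constructor
  · intro hinj t ht
    have hfib : T.filter (fun s => s.1 = t.1) = {t} := by
      ext s
      simp only [Finset.mem_filter, Finset.mem_singleton]
      constructor
      · rintro ⟨hs, h1⟩
        exact hinj hs ht h1
      · rintro rfl
        exact ⟨ht, rfl⟩
    rw [card_fiber_sum F X t.1, ← hT, hfib, Finset.sum_singleton]
  · intro hC t ht t' ht' h1
    by_contra hne
    have hsub : {t, t'} ⊆ T.filter (fun s => s.1 = t.1) := by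
      intro s hs
      rcases Finset.mem_insert.mp hs with rfl | hs
      · exact Finset.mem_filter.mpr ⟨ht, rfl⟩
      · rw [Finset.mem_singleton] at hs
        subst hs
        exact Finset.mem_filter.mpr ⟨ht', h1.symm⟩
    have hsum : (univ.filter (fun i => (F i, X i) = t)).card
        + (univ.filter (fun i => (F i, X i) = t')).card
        ≤ ∑ s ∈ T.filter (fun s => s.1 = t.1), (univ.filter (fun i => (F i, X i) = s)).card := by
      calc (univ.filter (fun i => (F i, X i) = t)).card
            + (univ.filter (fun i => (F i, X i) = t')).card
          = ∑ s ∈ ({t, t'} : Finset (A × B)), (univ.filter (fun i => (F i, X i) = s)).card :=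
            (Finset.sum_pair (f := fun s => (univ.filter (fun i => (F i, X i) = s)).card) hne).symm
        _ ≤ _ := Finset.sum_le_sum_of_subset hsub
    rw [← card_fiber_sum F X t.1, hC t ht] at hsum
    have := one_le_card_of_mem F X ht'
    omega

private lemma entropy_iff (F : P → A) (X : P → B) [Nonempty P] :
    empEntropy (fun i => (F i, X i)) = empEntropy F ↔ condC F X := by
  classical
  set T := univ.image (fun i => (F i, X i)) with hT
  set n : ℝ := (Fintype.card P : ℝ) with hn
  have hn0 : 0 < n := by
    rw [hn]
    exact_mod_cast Fintype.card_pos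
  set c : A × B → ℝ := fun t => ((univ.filter (fun i => (F i, X i) = t)).card : ℝ) with hc
  set q : A → ℝ := fun a => ((univ.filter (fun i => F i = a)).card : ℝ) with hq
  have hcpos : ∀ t ∈ T, 0 < c t := by
    intro t ht
    have := one_le_card_of_mem F X ht
    show (0:ℝ) < ((univ.filter (fun i => (F i, X i) = t)).card : ℝ)
    exact_mod_cast this
  have hcq : ∀ t : A × B, c t ≤ q t.1 := by
    intro t
    show ((univ.filter (fun i => (F i, X i) = t)).card : ℝ) ≤ ((univ.filter (fun i => F i = t.1)).card : ℝ)
    exact_mod_cast card_le_card_fst F X t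
  -- rewrite empEntropy F as a sum over T
  have hEF : empEntropy F = -∑ t ∈ T, (c t / n) * Real.logb 2 (q t.1 / n) := by
    rw [empEntropy, imageF_eq F X, ← hT, ← hn]
    congr 1
    rw [← Finset.sum_fiberwise_of_maps_to (g := Prod.fst) (t := T.image Prod.fst)
        (fun t ht => Finset.mem_image_of_mem _ ht)
        (fun t => (c t / n) * Real.logb 2 (q t.1 / n))]
    refine Finset.sum_congr rfl ?_
    intro a ha
    have hqa : q a = ∑ t ∈ T.filter (fun t => t.1 = a), c t := by
      rw [hq]
      push_cast [card_fiber_sum F X a, ← hT]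
      rfl
    calc q a / n * Real.logb 2 (q a / n)
        = ∑ t ∈ T.filter (fun t => t.1 = a), (c t / n) * Real.logb 2 (q a / n) := by
          rw [← Finset.sum_mul, ← Finset.sum_div, ← hqa]
      _ = ∑ t ∈ T.filter (fun t => t.1 = a), (c t / n) * Real.logb 2 (q t.1 / n) := by
          refine Finset.sum_congr rfl ?_
          intro t ht
          rw [(Finset.mem_filter.mp ht).2]
  have hEJ : empEntropy (fun i => (F i, X i)) = -∑ t ∈ T, (c t / n) * Real.logb 2 (c t / n) := by
    rfl
  have key : empEntropy (fun i => (F i, X i)) - empEntropy F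
      = ∑ t ∈ T, (c t / n) * (Real.logb 2 (q t.1 / n) - Real.logb 2 (c t / n)) := by
    rw [hEJ, hEF, neg_sub_neg, ← Finset.sum_sub_distrib]
    exact Finset.sum_congr rfl fun t _ => by ring
  have hterm : ∀ t ∈ T, 0 ≤ (c t / n) * (Real.logb 2 (q t.1 / n) - Real.logb 2 (c t / n)) := by
    intro t ht
    apply mul_nonneg (by positivity)
    rw [sub_nonneg]
    exact Real.logb_le_logb_of_le one_lt_two (div_pos (hcpos t ht) hn0)
      (div_le_div_of_nonneg_right (hcq t) hn0.le)
  constructor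
  · intro h
    have h0 : ∑ t ∈ T, (c t / n) * (Real.logb 2 (q t.1 / n) - Real.logb 2 (c t / n)) = 0 := by
      rw [← key, h, sub_self]
    rw [Finset.sum_eq_zero_iff_of_nonneg hterm] at h0
    intro t ht
    have hz := h0 t ht
    have hc0 : 0 < c t / n := by
      have := hcpos t ht
      positivity
    have hlog : Real.logb 2 (q t.1 / n) = Real.logb 2 (c t / n) := by
      rcases mul_eq_zero.mp hz with h' | h'
      · exact absurd h' (ne_of_gt hc0)
      · linarith [sub_eq_zero.mp h']
    have hq0 : 0 < q t.1 / n := lt_of_lt_of_le hc0 (div_le_div_of_nonneg_right (hcq t) hn0.le)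
    have heq : q t.1 = c t := by
      have := Real.logb_injOn_pos one_lt_two (Set.mem_Ioi.mpr hq0) (Set.mem_Ioi.mpr hc0) hlog
      field_simp at this
      exact this
    have heq2 : ((univ.filter (fun i => F i = t.1)).card : ℝ)
        = ((univ.filter (fun i => (F i, X i) = t)).card : ℝ) := heq
    exact_mod_cast heq2
  · intro hC
    have h0 : ∑ t ∈ T, (c t / n) * (Real.logb 2 (q t.1 / n) - Real.logb 2 (c t / n)) = 0 := by
      refine Finset.sum_eq_zero fun t ht => ?_
      have heq : q t.1 = c t := by
        show ((univ.filter (fun i => F i = t.1)).card : ℝ)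
            = ((univ.filter (fun i => (F i, X i) = t)).card : ℝ)
        exact_mod_cast hC t ht
      rw [heq, sub_self, mul_zero]
    have := key.trans h0
    linarith

end Aux

/-- Lemma 2.1: `U(X|F) = 1 ↔ Disperse(S, X, P) = 1`. -/
theorem uncertainty_one_iff_disperse_one
    {P A B : Type*} [Fintype P] [Nonempty P] [DecidableEq A] [DecidableEq B]
    (F : P → A) (X : P → B) (hX : 0 < empEntropy X) :
    uncertaintyCoeff F X = 1 ↔ disperse F X = 1 := by
  have h1 : uncertaintyCoeff F X = 1 ↔ empEntropy (fun i => (F i, X i)) = empEntropy F := by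
    rw [uncertaintyCoeff, div_eq_one_iff_eq (ne_of_gt hX)]
    constructor
    · intro h; linarith
    · intro h; rw [h]; ring
  have hcard0 : 0 < (univ.image F).card :=
    Finset.card_pos.mpr (Finset.univ_nonempty.image F)
  have h2 : disperse F X = 1 ↔
      (univ.image (fun i => (F i, X i))).card = (univ.image F).card := by
    rw [disperse, numBins, numBins,
      div_eq_one_iff_eq (by exact_mod_cast hcard0.ne' : ((univ.image F).card : ℝ) ≠ 0)]
    exact Nat.cast_inj
  rw [h1, h2, entropy_iff, bins_iff]
end

section
/- If the uncertainty coefficient of an added feature X given the existing feature set F equals 0 (i.e., X is empirically independent of F), then the dispersal ratio upon adding X attains its maximum value |Range(X)|, the number of distinct values of X observed in P; that is, U(X|F) = 0 ⟹ Disperse(S, X, P) = |Range(X)|. -/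
open Finset

section aux
variable {P A B : Type*} [Fintype P] [DecidableEq A] [DecidableEq B]

lemma count_fiber_fst (F : P → A) (X : P → B) (a : A) :
    (univ.filter fun i => F i = a).card
      = ∑ ab ∈ (univ.image (fun i => (F i, X i))).filter (fun ab => ab.1 = a),
          (univ.filter fun i => (F i, X i) = ab).card := by
  rw [Finset.card_eq_sum_card_fiberwise
      (f := fun i => (F i, X i))
      (t := (univ.image (fun i => (F i, X i))).filter (fun ab => ab.1 = a))
      (fun i hi => by
        simp only [Finset.mem_coe, mem_filter, mem_image, mem_univ, true_and] at hi ⊢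
        exact ⟨⟨i, rfl⟩, hi⟩)]
  refine Finset.sum_congr rfl fun ab hab => ?_
  congr 1
  ext i
  simp only [mem_filter, mem_univ, true_and]
  constructor
  · exact fun h => h.2
  · intro h
    simp only [mem_filter] at hab
    refine ⟨?_, h⟩
    rw [← hab.2, ← h]

lemma count_fiber_snd (F : P → A) (X : P → B) (b : B) :
    (univ.filter fun i => X i = b).card
      = ∑ ab ∈ (univ.image (fun i => (F i, X i))).filter (fun ab => ab.2 = b),
          (univ.filter fun i => (F i, X i) = ab).card := by
  rw [Finset.card_eq_sum_card_fiberwise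
      (f := fun i => (F i, X i))
      (t := (univ.image (fun i => (F i, X i))).filter (fun ab => ab.2 = b))
      (fun i hi => by
        simp only [Finset.mem_coe, mem_filter, mem_image, mem_univ, true_and] at hi ⊢
        exact ⟨⟨i, rfl⟩, hi⟩)]
  refine Finset.sum_congr rfl fun ab hab => ?_
  congr 1
  ext i
  simp only [mem_filter, mem_univ, true_and]
  constructor
  · exact fun h => h.2
  · intro h
    simp only [mem_filter] at hab
    refine ⟨?_, h⟩
    rw [← hab.2, ← h]

lemma count_total {α : Type*} [DecidableEq α] (Y : P → α) :
    (Fintype.card P)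
      = ∑ a ∈ univ.image Y, (univ.filter fun i => Y i = a).card := by
  rw [← Finset.card_univ]
  exact Finset.card_eq_sum_card_fiberwise (fun i _ => mem_image_of_mem Y (mem_univ i))

end aux

set_option maxHeartbeats 1000000 in
/-- Lemma 2.2: `U(X|F) = 0 → Disperse(S, X, P) = |Range(X)|`. -/
theorem uncertainty_zero_implies_max_dispersal
    {P A B : Type*} [Fintype P] [Nonempty P] [DecidableEq A] [DecidableEq B]
    (F : P → A) (X : P → B) (hX : 0 < empEntropy X)
    (hU : uncertaintyCoeff F X = 0) :
    disperse F X = (numBins X : ℝ) := by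
  classical
  set J := univ.image (fun i : P => (F i, X i)) with hJ_def
  set IF := univ.image F with hIF_def
  set IX := univ.image X with hIX_def
  set n : ℝ := (Fintype.card P : ℝ) with hn_def
  have hn : 0 < n := by
    have := Fintype.card_pos (α := P)
    rw [hn_def]; exact_mod_cast this
  set q : A × B → ℝ := fun ab => ((univ.filter fun i => (F i, X i) = ab).card : ℝ) / n
    with hq_def
  set r : A → ℝ := fun a => ((univ.filter fun i => F i = a).card : ℝ) / n with hr_def
  set s : B → ℝ := fun b => ((univ.filter fun i => X i = b).card : ℝ) / n with hs_def
  -- positivity of empirical probabilities on supports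
  have hqpos : ∀ ab ∈ J, 0 < q ab := by
    intro ab hab
    rw [hJ_def] at hab
    obtain ⟨i, _, hi⟩ := mem_image.1 hab
    have hmem : i ∈ univ.filter fun j => (F j, X j) = ab := by
      simp [hi]
    have hc : 0 < (univ.filter fun j => (F j, X j) = ab).card :=
      Finset.card_pos.2 ⟨i, hmem⟩
    exact div_pos (by exact_mod_cast hc) hn
  have hrpos : ∀ a ∈ IF, 0 < r a := by
    intro a ha
    rw [hIF_def] at ha
    obtain ⟨i, _, hi⟩ := mem_image.1 ha
    have hmem : i ∈ univ.filter fun j => F j = a := by simp [hi]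
    have hc : 0 < (univ.filter fun j => F j = a).card := Finset.card_pos.2 ⟨i, hmem⟩
    exact div_pos (by exact_mod_cast hc) hn
  have hspos : ∀ b ∈ IX, 0 < s b := by
    intro b hb
    rw [hIX_def] at hb
    obtain ⟨i, _, hi⟩ := mem_image.1 hb
    have hmem : i ∈ univ.filter fun j => X j = b := by simp [hi]
    have hc : 0 < (univ.filter fun j => X j = b).card := Finset.card_pos.2 ⟨i, hmem⟩
    exact div_pos (by exact_mod_cast hc) hn
  -- maps to marginal supports
  have hmapF : ∀ ab ∈ J, ab.1 ∈ IF := by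
    intro ab hab
    rw [hJ_def] at hab
    obtain ⟨i, _, hi⟩ := mem_image.1 hab
    rw [hIF_def]
    exact mem_image.2 ⟨i, mem_univ i, congrArg Prod.fst hi⟩
  have hmapX : ∀ ab ∈ J, ab.2 ∈ IX := by
    intro ab hab
    rw [hJ_def] at hab
    obtain ⟨i, _, hi⟩ := mem_image.1 hab
    rw [hIX_def]
    exact mem_image.2 ⟨i, mem_univ i, congrArg Prod.snd hi⟩
  -- sum totals
  have hqsum : ∑ ab ∈ J, q ab = 1 := by
    simp only [hq_def, hn_def, hJ_def, ← Finset.sum_div]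
    rw [div_eq_one_iff_eq (by exact_mod_cast (Fintype.card_pos (α := P)).ne')]
    exact_mod_cast (count_total (fun i => (F i, X i))).symm
  have hrsum : ∑ a ∈ IF, r a = 1 := by
    simp only [hr_def, hn_def, hIF_def, ← Finset.sum_div]
    rw [div_eq_one_iff_eq (by exact_mod_cast (Fintype.card_pos (α := P)).ne')]
    exact_mod_cast (count_total F).symm
  have hssum : ∑ b ∈ IX, s b = 1 := by
    simp only [hs_def, hn_def, hIX_def, ← Finset.sum_div]
    rw [div_eq_one_iff_eq (by exact_mod_cast (Fintype.card_pos (α := P)).ne')]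
    exact_mod_cast (count_total X).symm
  -- marginal fiber sums
  have hqr : ∀ a, ∑ ab ∈ J.filter (fun ab => ab.1 = a), q ab = r a := by
    intro a
    simp only [hq_def, hr_def, hJ_def, ← Finset.sum_div]
    congr 1
    exact_mod_cast (count_fiber_fst F X a).symm
  have hqs : ∀ b, ∑ ab ∈ J.filter (fun ab => ab.2 = b), q ab = s b := by
    intro b
    simp only [hq_def, hs_def, hJ_def, ← Finset.sum_div]
    congr 1
    exact_mod_cast (count_fiber_snd F X b).symm
  -- entropy formulas
  have hHF0 : empEntropy F = -∑ a ∈ IF, r a * Real.logb 2 (r a) := by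
    simp only [empEntropy, hr_def, hn_def, hIF_def]
  have hHX0 : empEntropy X = -∑ b ∈ IX, s b * Real.logb 2 (s b) := by
    simp only [empEntropy, hs_def, hn_def, hIX_def]
  have hHJ0 : empEntropy (fun i => (F i, X i)) = -∑ ab ∈ J, q ab * Real.logb 2 (q ab) := by
    simp only [empEntropy, hq_def, hn_def, hJ_def]
  -- rewrite marginal entropies as sums over the joint support
  have hsumF : ∑ ab ∈ J, q ab * Real.logb 2 (r ab.1)
      = ∑ a ∈ IF, r a * Real.logb 2 (r a) := by
    rw [← Finset.sum_fiberwise_of_maps_to (g := Prod.fst) hmapF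
        (fun ab => q ab * Real.logb 2 (r ab.1))]
    refine Finset.sum_congr rfl fun a _ => ?_
    have h1 : ∑ ab ∈ J.filter (fun ab => ab.1 = a), q ab * Real.logb 2 (r ab.1)
        = ∑ ab ∈ J.filter (fun ab => ab.1 = a), q ab * Real.logb 2 (r a) := by
      refine Finset.sum_congr rfl fun ab hab => ?_
      rw [(mem_filter.1 hab).2]
    rw [h1, ← Finset.sum_mul, hqr a]
  have hsumX : ∑ ab ∈ J, q ab * Real.logb 2 (s ab.2)
      = ∑ b ∈ IX, s b * Real.logb 2 (s b) := by
    rw [← Finset.sum_fiberwise_of_maps_to (g := Prod.snd) hmapX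
        (fun ab => q ab * Real.logb 2 (s ab.2))]
    refine Finset.sum_congr rfl fun b _ => ?_
    have h1 : ∑ ab ∈ J.filter (fun ab => ab.2 = b), q ab * Real.logb 2 (s ab.2)
        = ∑ ab ∈ J.filter (fun ab => ab.2 = b), q ab * Real.logb 2 (s b) := by
      refine Finset.sum_congr rfl fun ab hab => ?_
      rw [(mem_filter.1 hab).2]
    rw [h1, ← Finset.sum_mul, hqs b]
  -- the numerator of the uncertainty coefficient vanishes
  have hnum : empEntropy F + empEntropy X = empEntropy (fun i => (F i, X i)) := by
    rw [uncertaintyCoeff, div_eq_zero_iff] at hU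
    rcases hU with h | h
    · linarith
    · exact absurd h hX.ne'
  -- KL divergence vanishes
  have hKL : ∑ ab ∈ J,
      q ab * (Real.logb 2 (q ab) - Real.logb 2 (r ab.1) - Real.logb 2 (s ab.2)) = 0 := by
    have hsplit : ∑ ab ∈ J,
        q ab * (Real.logb 2 (q ab) - Real.logb 2 (r ab.1) - Real.logb 2 (s ab.2))
        = (∑ ab ∈ J, q ab * Real.logb 2 (q ab))
          - (∑ ab ∈ J, q ab * Real.logb 2 (r ab.1))
          - (∑ ab ∈ J, q ab * Real.logb 2 (s ab.2)) := by
      simp only [mul_sub, Finset.sum_sub_distrib]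
    rw [hsplit, hsumF, hsumX]
    linarith [hnum, hHF0, hHX0, hHJ0]
  set S : ℝ := ∑ ab ∈ J, r ab.1 * s ab.2 with hS_def
  have hL2 : (0:ℝ) < Real.log 2 := Real.log_pos one_lt_two
  -- pointwise bound from log x ≤ x - 1
  have hterm : ∀ ab ∈ J, (q ab - r ab.1 * s ab.2) / Real.log 2
      ≤ q ab * (Real.logb 2 (q ab) - Real.logb 2 (r ab.1) - Real.logb 2 (s ab.2)) := by
    intro ab hab
    have hq := hqpos ab hab
    have hr := hrpos ab.1 (hmapF ab hab)
    have hs := hspos ab.2 (hmapX ab hab)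
    have hlog : Real.log (r ab.1 * s ab.2 / q ab) ≤ r ab.1 * s ab.2 / q ab - 1 :=
      Real.log_le_sub_one_of_pos (by positivity)
    rw [Real.log_div (by positivity) hq.ne', Real.log_mul hr.ne' hs.ne'] at hlog
    have h2 : q ab * (Real.log (r ab.1) + Real.log (s ab.2) - Real.log (q ab))
        ≤ q ab * (r ab.1 * s ab.2 / q ab - 1) := by
      apply mul_le_mul_of_nonneg_left _ hq.le
      linarith [hlog]
    have h3 : q ab * (r ab.1 * s ab.2 / q ab - 1) = r ab.1 * s ab.2 - q ab := by
      field_simp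
    have h4 : q ab * (Real.log (q ab) - Real.log (r ab.1) - Real.log (s ab.2))
        = -(q ab * (Real.log (r ab.1) + Real.log (s ab.2) - Real.log (q ab))) := by ring
    have key : q ab - r ab.1 * s ab.2
        ≤ q ab * (Real.log (q ab) - Real.log (r ab.1) - Real.log (s ab.2)) := by
      linarith [h2, h3, h4]
    have hrw : q ab * (Real.logb 2 (q ab) - Real.logb 2 (r ab.1) - Real.logb 2 (s ab.2))
        = (q ab * (Real.log (q ab) - Real.log (r ab.1) - Real.log (s ab.2))) / Real.log 2 := by
      simp only [Real.logb]
      ring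
    rw [hrw]
    gcongr

  -- hence S ≥ 1
  have hS1 : 1 ≤ S := by
    have h1 : ∑ ab ∈ J, (q ab - r ab.1 * s ab.2) / Real.log 2
        ≤ ∑ ab ∈ J,
            q ab * (Real.logb 2 (q ab) - Real.logb 2 (r ab.1) - Real.logb 2 (s ab.2)) :=
      Finset.sum_le_sum hterm
    rw [hKL] at h1
    have h2 : ∑ ab ∈ J, (q ab - r ab.1 * s ab.2) / Real.log 2 = (1 - S) / Real.log 2 := by
      rw [← Finset.sum_div, Finset.sum_sub_distrib, hqsum]
    rw [h2] at h1
    by_contra h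
    push_neg at h
    have : 0 < (1 - S) / Real.log 2 := div_pos (by linarith) hL2
    linarith
  -- product support
  have hsub : J ⊆ IF ×ˢ IX := fun ab hab =>
    Finset.mem_product.2 ⟨hmapF ab hab, hmapX ab hab⟩
  have hT : ∑ ab ∈ IF ×ˢ IX, r ab.1 * s ab.2 = 1 := by
    rw [Finset.sum_product, ← Finset.sum_mul_sum, hrsum, hssum, one_mul]
  -- equality of supports
  have hJeq : J = IF ×ˢ IX := by
    by_contra hne
    have hx : ∃ ab ∈ IF ×ˢ IX, ab ∉ J := by
      by_contra hc
      push_neg at hc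
      exact hne (Finset.Subset.antisymm hsub hc)
    obtain ⟨ab, habT, habJ⟩ := hx
    have hpos : 0 < r ab.1 * s ab.2 := by
      have h := Finset.mem_product.1 habT
      exact mul_pos (hrpos _ h.1) (hspos _ h.2)
    have hlt := Finset.sum_lt_sum_of_subset hsub habT habJ hpos
      (fun cd hcd _ => by
        have h := Finset.mem_product.1 hcd
        exact (mul_pos (hrpos _ h.1) (hspos _ h.2)).le)
    rw [hT] at hlt
    linarith
  -- count bins and conclude
  have hIFpos : (0:ℝ) < (IF.card : ℝ) := by
    have : IF.Nonempty := ⟨F (Classical.arbitrary P), by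
      rw [hIF_def]; exact mem_image_of_mem F (mem_univ _)⟩
    exact_mod_cast Finset.card_pos.2 this
  have hcard : numBins (fun i => (F i, X i)) = numBins F * numBins X := by
    simp only [numBins]
    rw [← hJ_def, ← hIF_def, ← hIX_def, hJeq, Finset.card_product]
  simp only [disperse, hcard]
  have hnF : numBins F = IF.card := by simp only [numBins, ← hIF_def]
  have hnX : numBins X = IX.card := by simp only [numBins, ← hIX_def]
  rw [hnF, hnX]
  push_cast
  rw [mul_comm, mul_div_assoc, div_self hIFpos.ne', mul_one]
end
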